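/- Let Z be a proper subspace of a vector space X over K (ℝ or ℂ), T : Z → K a linear functional, p a seminorm on X, and f : ℝ → ℝ increasing on [0,∞). If F : Z → ℝ is defined by F(z) = f(|T(z)|) and satisfies F(z) ≤ f(p(z)) for all z ∈ Z, then F has an extension F̂ : X → ℝ of the form F̂(x) = f(|T̂(x)|) with F̂(x) ≤ f(p(x)) for all x ∈ X, where T̂ : X → K is a linear extension of T. -/

import Mathlib

open RCLike

/-- Hahn–Banach for a seminorm over `ℝ` or `ℂ`, on a general vector space. -/
theorem seminorm_hahn_banach {𝕜 X : Type*} [RCLike 𝕜] [AddCommGroup X] [Module 𝕜 X]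
    (Z : Submodule 𝕜 X) (T : Z →ₗ[𝕜] 𝕜) (p : Seminorm 𝕜 X)
    (hT : ∀ z : Z, ‖T z‖ ≤ p (z : X)) :
    ∃ That : X →ₗ[𝕜] 𝕜, (∀ z : Z, That (z : X) = T z) ∧ ∀ x : X, ‖That x‖ ≤ p x := by
  letI : Module ℝ X := Module.compHom X (algebraMap ℝ 𝕜)
  haveI : IsScalarTower ℝ 𝕜 X := ⟨fun r k x => by rw [Algebra.smul_def, mul_smul]; rfl⟩
  let φ : (Z.restrictScalars ℝ (R := 𝕜)) →ₗ[ℝ] ℝ :=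
    { toFun := fun z => re (T ⟨z.1, z.2⟩)
      map_add' := fun a b => by
        show re (T (⟨a.1, a.2⟩ + ⟨b.1, b.2⟩)) = _
        rw [map_add, map_add]
      map_smul' := fun c a => by
        have h1 : (⟨(c • a).1, (c • a).2⟩ : Z) = (c : 𝕜) • (⟨a.1, a.2⟩ : Z) := by
          apply Subtype.ext
          show c • a.1 = (c : 𝕜) • a.1
          exact real_smul_eq_coe_smul (K := 𝕜) c a.1
        show re (T ⟨(c • a).1, (c • a).2⟩) = c • re (T ⟨a.1, a.2⟩)
        rw [h1, map_smul]
        simp [smul_eq_mul, real_smul_eq_coe_mul] }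
  let fp : X →ₗ.[ℝ] ℝ := ⟨Z.restrictScalars ℝ, φ⟩
  obtain ⟨g, hg, hgle⟩ := exists_extension_of_le_sublinear fp (fun x => p x)
    (fun c hc x => by
      show p ((algebraMap ℝ 𝕜 c) • x) = c * p x
      rw [map_smul_eq_mul, norm_algebraMap', Real.norm_eq_abs, abs_of_pos hc])
    (fun x y => map_add_le_add p x y)
    (fun x => (re_le_norm _).trans (hT ⟨x.1, x.2⟩))
  refine ⟨Module.Dual.extendRCLike g, fun z => ?_, fun x => ?_⟩
  · have h1 : g (z : X) = re (T z) := hg ⟨(z : X), z.2⟩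
    have h2 : g ((I : 𝕜) • (z : X)) = re (T ((I : 𝕜) • z)) := by
      have := hg ⟨(I : 𝕜) • (z : X), Submodule.smul_mem Z _ z.2⟩
      rw [this]
      rfl
    rw [Module.Dual.extendRCLike_apply, h1, h2, map_smul, smul_eq_mul, I_mul_re,
      RCLike.ofReal_neg, mul_neg, sub_neg_eq_add, mul_comm, re_add_im]
  · have hsq := g.norm_extendTo𝕜'_apply_sq (𝕜 := 𝕜) x
    have hb : ‖Module.Dual.extendRCLike (𝕜 := 𝕜) g x‖ ^ 2 ≤ ‖Module.Dual.extendRCLike (𝕜 := 𝕜) g x‖ * p x := by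
      rw [hsq]
      calc g ((starRingEnd 𝕜) (g.extendTo𝕜' x) • x)
          ≤ p ((starRingEnd 𝕜) (g.extendTo𝕜' x) • x) := hgle _
        _ = ‖(starRingEnd 𝕜) (g.extendTo𝕜' x)‖ * p x := map_smul_eq_mul p _ _
        _ = ‖g.extendTo𝕜' (𝕜 := 𝕜) x‖ * p x := by rw [norm_conj]
    rcases (norm_nonneg (Module.Dual.extendRCLike (𝕜 := 𝕜) g x)).eq_or_lt with h0 | hpos
    · rw [← h0]; exact apply_nonneg p x
    · rw [sq] at hb
      exact (mul_le_mul_iff_right₀ hpos).mp hb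

theorem stmt11 {𝕜 X : Type*} [RCLike 𝕜] [AddCommGroup X] [Module 𝕜 X]
    (Z : Submodule 𝕜 X) (hZ : Z ≠ ⊤)
    (T : Z →ₗ[𝕜] 𝕜) (p : Seminorm 𝕜 X)
    (f : ℝ → ℝ) (hf : ∀ a b : ℝ, 0 ≤ a → a ≤ b → f a ≤ f b)
    (hFp : ∀ z : Z, f ‖T z‖ ≤ f (p (z : X))) :
    ∃ That : X →ₗ[𝕜] 𝕜, (∀ z : Z, That (z : X) = T z) ∧
      ∀ x : X, f ‖That x‖ ≤ f (p x) := by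
  classical
  by_cases hA : ∀ z : Z, ‖T z‖ ≤ p (z : X)
  · obtain ⟨That, hext, hbound⟩ := seminorm_hahn_banach Z T p hA
    exact ⟨That, hext, fun x => hf _ _ (norm_nonneg _) (hbound x)⟩
  push_neg at hA
  obtain ⟨z0, hz0⟩ := hA
  have hscale : ∀ z : Z, ∀ t : ℝ, 0 ≤ t → f (t * ‖T z‖) ≤ f (t * p (z : X)) := by
    intro z t ht
    have := hFp ((t : 𝕜) • z)
    simpa [norm_smul, map_smul_eq_mul, abs_of_nonneg ht] using this
  by_cases hB1 : ∃ z : Z, p (z : X) = 0 ∧ T z ≠ 0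
  · -- `f b ≤ f 0` for all `b ≥ 0`; any linear extension works.
    obtain ⟨z1, hpz1, hTz1⟩ := hB1
    have hr1 : 0 < ‖T z1‖ := norm_pos_iff.mpr hTz1
    have hconst : ∀ b : ℝ, 0 ≤ b → f b ≤ f 0 := by
      intro b hb
      have := hscale z1 (b / ‖T z1‖) (div_nonneg hb hr1.le)
      rwa [div_mul_cancel₀ _ hr1.ne', hpz1, mul_zero] at this
    obtain ⟨Q, hQ⟩ := Submodule.exists_isCompl Z
    refine ⟨T ∘ₗ Z.linearProjOfIsCompl Q hQ, fun z => ?_, fun x => ?_⟩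
    · exact congrArg T (Submodule.linearProjOfIsCompl_apply_left hQ z)
    · exact (hconst _ (norm_nonneg _)).trans (hf 0 (p x) le_rfl (apply_nonneg p x))
  push_neg at hB1
  -- key monotonicity collapse: `f b ≤ f a` for all `a > 0`, `b ≥ 0`.
  set s := p (z0 : X) with hs_def
  set r := ‖T z0‖ with hr_def
  have hs : 0 ≤ s := apply_nonneg p _
  have hr : 0 < r := hs.trans_lt hz0
  have step : ∀ c : ℝ, 0 ≤ c → f c ≤ f (c * (s / r)) := by
    intro c hc
    have h := hscale z0 (c / r) (div_nonneg hc hr.le)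
    rw [div_mul_cancel₀ _ hr.ne'] at h
    rw [div_mul_eq_mul_div, ← hs_def] at h
    rwa [mul_div_assoc] at h
  have iter : ∀ n : ℕ, ∀ c : ℝ, 0 ≤ c → f c ≤ f (c * (s / r) ^ n) := by
    intro n
    induction n with
    | zero => intro c hc; simp
    | succ n ih =>
      intro c hc
      have h1 := ih c hc
      have h2 := step (c * (s / r) ^ n) (mul_nonneg hc (pow_nonneg (div_nonneg hs hr.le) n))
      calc f c ≤ f (c * (s / r) ^ n) := h1
        _ ≤ f (c * (s / r) ^ n * (s / r)) := h2
        _ = f (c * (s / r) ^ (n + 1)) := by ring_nf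
  have key : ∀ a b : ℝ, 0 < a → 0 ≤ b → f b ≤ f a := by
    intro a b ha hb
    by_cases hba : b ≤ a
    · exact hf b a hb hba
    push_neg at hba
    have hb0 : 0 < b := ha.trans hba
    have hk : s / r < 1 := (div_lt_one hr).2 hz0
    obtain ⟨n, hn⟩ := exists_pow_lt_of_lt_one (div_pos ha hb0) hk
    have hle : b * (s / r) ^ n ≤ a := by
      rw [mul_comm]
      exact ((lt_div_iff₀ hb0).mp hn).le
    exact (iter n b hb).trans
      (hf _ _ (mul_nonneg hb0.le (pow_nonneg (div_nonneg hs hr.le) n)) hle)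
  -- kernel of `p`
  let N : Submodule 𝕜 X :=
    { carrier := {x | p x = 0}
      add_mem' := fun {a b} ha hb => le_antisymm
        (by
          calc p (a + b) ≤ p a + p b := map_add_le_add p a b
            _ = 0 := by rw [Set.mem_setOf_eq] at ha hb; rw [ha, hb, add_zero])
        (apply_nonneg p _)
      zero_mem' := map_zero p
      smul_mem' := fun c x hx => by
        show p (c • x) = 0
        rw [map_smul_eq_mul]
        rw [Set.mem_setOf_eq] at hx
        rw [hx, mul_zero] }
  have hNmem : ∀ x : X, x ∈ N ↔ p x = 0 := fun x => Iff.rfl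
  obtain ⟨C', hC'⟩ := Submodule.exists_isCompl ((Z ⊓ N).comap N.subtype)
  set C : Submodule 𝕜 X := C'.map N.subtype with hC_def
  obtain ⟨D, hD⟩ := Submodule.exists_isCompl (Z ⊔ C)
  have hNsub : ∀ x : X, x ∈ N → ∃ a c : X, a ∈ Z ⊓ N ∧ c ∈ C ∧ x = a + c := by
    intro n hn
    have hmem : (⟨n, hn⟩ : N) ∈ ((Z ⊓ N).comap N.subtype) ⊔ C' := by
      rw [hC'.sup_eq_top]; trivial
    obtain ⟨a, ha, c, hc, hac⟩ := Submodule.mem_sup.mp hmem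
    refine ⟨(a : X), (c : X), ha, Submodule.mem_map_of_mem hc, ?_⟩
    have := congrArg (Subtype.val) hac
    simpa using this.symm
  have hZC : ∀ x : X, x ∈ Z → x ∈ C → x = 0 := by
    intro x hxZ hxC
    obtain ⟨c', hc', hc'x⟩ := Submodule.mem_map.mp hxC
    have hxN : x ∈ N := hc'x ▸ (c' : N).2
    have h1 : c' ∈ ((Z ⊓ N).comap N.subtype) := by
      have : c' = (⟨x, hxN⟩ : N) := Subtype.ext hc'x
      rw [this]
      exact ⟨hxZ, hxN⟩
    have := hC'.disjoint.le_bot ⟨h1, hc'⟩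
    rw [Submodule.mem_bot] at this
    rw [← hc'x, this]
    rfl
  have hcompl : IsCompl Z (C ⊔ D) := by
    constructor
    · rw [disjoint_iff]
      rw [eq_bot_iff]
      intro x hx
      obtain ⟨hxZ, hxCD⟩ := Submodule.mem_inf.mp hx
      obtain ⟨c, hc, d, hd, hcd⟩ := Submodule.mem_sup.mp hxCD
      have hdmem : d ∈ Z ⊔ C := by
        have : d = x - c := by rw [← hcd]; abel
        rw [this]
        exact Submodule.sub_mem _ (Submodule.mem_sup_left hxZ) (Submodule.mem_sup_right hc)
      have hd0 : d = 0 := by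
        have := hD.disjoint.le_bot ⟨hdmem, hd⟩
        rwa [Submodule.mem_bot] at this
      have hxC : x ∈ C := by rw [← hcd, hd0, add_zero]; exact hc
      rw [Submodule.mem_bot]
      exact hZC x hxZ hxC
    · rw [codisjoint_iff, ← sup_assoc, hD.sup_eq_top]
  refine ⟨T ∘ₗ Z.linearProjOfIsCompl (C ⊔ D) hcompl, fun z => ?_, fun x => ?_⟩
  · exact congrArg T (Submodule.linearProjOfIsCompl_apply_left hcompl z)
  · have hvanish : p x = 0 → (T ∘ₗ Z.linearProjOfIsCompl (C ⊔ D) hcompl) x = 0 := by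
      intro hpx
      obtain ⟨a, c, haZN, hcC, hx⟩ := hNsub x ((hNmem x).mpr hpx)
      have ha1 : (T ∘ₗ Z.linearProjOfIsCompl (C ⊔ D) hcompl) a = 0 := by
        have : Z.linearProjOfIsCompl (C ⊔ D) hcompl a = ⟨a, haZN.1⟩ :=
          Submodule.linearProjOfIsCompl_apply_left hcompl ⟨a, haZN.1⟩
        rw [LinearMap.comp_apply, this]
        exact hB1 ⟨a, haZN.1⟩ haZN.2
      have hc1 : (T ∘ₗ Z.linearProjOfIsCompl (C ⊔ D) hcompl) c = 0 := by
        have : Z.linearProjOfIsCompl (C ⊔ D) hcompl c = 0 :=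
          Submodule.linearProjOfIsCompl_apply_right hcompl
            ⟨c, Submodule.mem_sup_left hcC⟩
        rw [LinearMap.comp_apply, this, map_zero]
      rw [hx, map_add, ha1, hc1, add_zero]
    rcases (apply_nonneg p x).eq_or_lt with h0 | hpos
    · rw [hvanish h0.symm, norm_zero, ← h0]
    · exact key (p x) _ hpos (norm_nonneg _)
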